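/- (Connectedness of the distant graph, Theorem 1) The simple graph G whose vertices are the unimodular pairs x ∈ ℤ × ℤ, with x and y adjacent if and only if |det(x,y)| = 1, is preconnected: any two unimodular pairs are joined by a path in G. -/

import Mathlib

/-- The determinant of two integer vectors in the plane. -/
def det (x y : ℤ × ℤ) : ℤ := x.1 * y.2 - x.2 * y.1

/-- The distant graph of the projective line over `ℤ`, on the level of unimodular pairs:
vertices are the unimodular pairs, and two of them are adjacent iff the absolute value of
their determinant is `1`. -/
def distGraph : SimpleGraph {x : ℤ × ℤ // Int.gcd x.1 x.2 = 1} where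
  Adj a b := |det a.1 b.1| = 1
  symm := by
    constructor
    intro a b h
    try dsimp only at h ⊢
    have : det b.1 a.1 = -(det a.1 b.1) := by simp only [det]; ring
    rw [this, abs_neg]
    exact h
  loopless := by
    constructor
    intro a h
    try dsimp only at h ⊢
    have : det a.1 a.1 = 0 := by simp only [det]; ring
    rw [this] at h
    simp at h


lemma reach_aux : ∀ n (x : {x : ℤ × ℤ // Int.gcd x.1 x.2 = 1}), x.1.2.natAbs = n →
    distGraph.Reachable x ⟨(0,1), by norm_num⟩ := by
  intro n
  induction n using Nat.strong_induction_on with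
  | _ n ih =>
    intro x hx
    obtain ⟨⟨a, b⟩, hab⟩ := x
    simp only at hx
    by_cases hb : b = 0
    · subst hb
      have ha : a = 1 ∨ a = -1 := by
        have h1 : a.natAbs = 1 := by simpa [Int.gcd] using hab
        omega
      apply SimpleGraph.Adj.reachable
      show |det (a, 0) (0, 1)| = 1
      simp only [det]
      rcases ha with h | h <;> simp [h]
    · obtain ⟨u, v, huv⟩ := Int.isCoprime_iff_gcd_eq_one.mpr hab
      set k : ℤ := -(u / b) with hk
      set x' : ℤ := -v + k * a with hx'
      set y' : ℤ := u + k * b with hy'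
      have hdet : a * y' - b * x' = 1 := by
        simp only [hx', hy']; ring_nf; linarith [huv]
      have hg : Int.gcd x' y' = 1 := by
        rw [← Int.isCoprime_iff_gcd_eq_one]
        exact ⟨-b, a, by linarith [hdet]⟩
      have hym : y' = u % b := by
        simp only [hy', hk, Int.emod_def]; ring
      have hlt : y'.natAbs < n := by
        have h1 : u % b < |b| := by have := Int.emod_lt u hb; rwa [← Int.abs_eq_natAbs] at this
        have h2 : 0 ≤ u % b := Int.emod_nonneg _ hb
        have h3 : |b| = b.natAbs := Int.abs_eq_natAbs b
        rw [hym]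
        omega
      have hadj : distGraph.Adj ⟨(a, b), hab⟩ ⟨(x', y'), hg⟩ := by
        show |det (a, b) (x', y')| = 1
        have : det (a, b) (x', y') = 1 := by simpa [det] using hdet
        simp [this]
      exact hadj.reachable.trans (ih y'.natAbs hlt ⟨(x', y'), hg⟩ rfl)

/-- The distant graph of `P(ℤ)` is connected: any two unimodular pairs are joined by
a path. -/
theorem distGraph_preconnected : distGraph.Preconnected := by
  intro x y
  exact (reach_aux _ x rfl).trans (reach_aux _ y rfl).symm
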